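/- Let θ ∈ (0,π) with θ/π irrational and let B ∈ SL(2,ℝ). Then the set of integers n ∈ ℤ such that 0 < |tr(B·R(θ)ⁿ)| < 2 is infinite; in particular B·R(θ)ⁿ is elliptic for infinitely many n. -/

import Mathlib

open Matrix Real

noncomputable section

/-- `SL(2,ℝ)`. -/
abbrev SL2R := Matrix.SpecialLinearGroup (Fin 2) ℝ

/-- The rotation matrix `R(θ) = [[cos θ, sin θ], [-sin θ, cos θ]]`, as an element of `SL(2,ℝ)`. -/
def rotMat (θ : ℝ) : SL2R :=
  ⟨!![Real.cos θ, Real.sin θ; -Real.sin θ, Real.cos θ], by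
    simp [Matrix.det_fin_two_of]
    ring_nf
    nlinarith [Real.sin_sq_add_cos_sq θ]⟩

set_option maxHeartbeats 1000000

lemma rotMat_add (x y : ℝ) : rotMat (x + y) = rotMat x * rotMat y := by
  ext i j
  simp only [Matrix.SpecialLinearGroup.coe_mul]
  simp only [rotMat]
  fin_cases i <;> fin_cases j <;>
    simp [Matrix.mul_apply, Fin.sum_univ_two, Real.cos_add, Real.sin_add] <;> ring

lemma rotMat_zero : rotMat 0 = 1 := by
  ext i j
  fin_cases i <;> fin_cases j <;> simp [rotMat]

lemma rotMat_inv (x : ℝ) : (rotMat x)⁻¹ = rotMat (-x) := by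
  rw [inv_eq_iff_mul_eq_one, ← rotMat_add]
  simp [rotMat_zero]

lemma rotMat_zpow (θ : ℝ) (n : ℤ) : rotMat θ ^ n = rotMat (n * θ) := by
  induction n using Int.induction_on with
  | zero => simpa using rotMat_zero.symm
  | succ k ih =>
      rw [_root_.zpow_add_one, ih, ← rotMat_add]
      push_cast; ring_nf
  | pred k ih =>
      rw [_root_.zpow_sub_one, ih, rotMat_inv, ← rotMat_add]
      push_cast; ring_nf

lemma trace_mul_rot (B : SL2R) (ψ : ℝ) :
    Matrix.trace ((B * rotMat ψ : SL2R) : Matrix (Fin 2) (Fin 2) ℝ) =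
      ((B : Matrix (Fin 2) (Fin 2) ℝ) 0 0 + (B : Matrix (Fin 2) (Fin 2) ℝ) 1 1) * Real.cos ψ +
      ((B : Matrix (Fin 2) (Fin 2) ℝ) 1 0 - (B : Matrix (Fin 2) (Fin 2) ℝ) 0 1) * Real.sin ψ := by
  rw [Matrix.SpecialLinearGroup.coe_mul]
  simp [rotMat, Matrix.trace_fin_two, Matrix.mul_apply, Fin.sum_univ_two]
  ring

/-- If `θ ∈ (0,π)` with `θ/π` irrational and `B ∈ SL(2,ℝ)`, then for infinitely
many `n ∈ ℤ` we have `0 < |tr (B · R(θ)ⁿ)| < 2`; in particular `B · R(θ)ⁿ` is elliptic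
for infinitely many `n`. -/
theorem infinite_elliptic_powers (θ : ℝ) (hθ : θ ∈ Set.Ioo (0:ℝ) Real.pi)
    (hirr : Irrational (θ / Real.pi)) (B : SL2R) :
    {n : ℤ | 0 < |Matrix.trace ((B * rotMat θ ^ n : SL2R) : Matrix (Fin 2) (Fin 2) ℝ)| ∧
      |Matrix.trace ((B * rotMat θ ^ n : SL2R) : Matrix (Fin 2) (Fin 2) ℝ)| < 2}.Infinite := by
  obtain ⟨hθ0, hθπ⟩ := hθ
  have hπ := Real.pi_gt_three
  set p : ℝ := (B : Matrix (Fin 2) (Fin 2) ℝ) 0 0 + (B : Matrix (Fin 2) (Fin 2) ℝ) 1 1 with hp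
  set q : ℝ := (B : Matrix (Fin 2) (Fin 2) ℝ) 1 0 - (B : Matrix (Fin 2) (Fin 2) ℝ) 0 1 with hq
  set f : ℝ → ℝ := fun x => p * Real.cos x + q * Real.sin x with hf
  have hfcont : Continuous f := by fun_prop
  have hper : ∀ (x : ℝ) (z : ℤ), f (x + z * (2*π)) = f x := by
    intro x z
    simp [hf, Real.cos_add_int_mul_two_pi, Real.sin_add_int_mul_two_pi]
  have htr : ∀ n : ℤ, Matrix.trace ((B * rotMat θ ^ n : SL2R) : Matrix (Fin 2) (Fin 2) ℝ)
      = f ((n : ℝ) * θ) := by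
    intro n
    rw [rotMat_zpow θ n, trace_mul_rot B ((n:ℝ) * θ)]
  -- the vector (p,q) has norm ≥ 2
  have hdet : (B : Matrix (Fin 2) (Fin 2) ℝ) 0 0 * (B : Matrix (Fin 2) (Fin 2) ℝ) 1 1
      - (B : Matrix (Fin 2) (Fin 2) ℝ) 0 1 * (B : Matrix (Fin 2) (Fin 2) ℝ) 1 0 = 1 := by
    have h2 := B.2
    rwa [Matrix.det_fin_two] at h2
  have hs4 : (4:ℝ) ≤ p^2 + q^2 := by
    rw [hp, hq]
    nlinarith [sq_nonneg ((B : Matrix (Fin 2) (Fin 2) ℝ) 0 0 - (B : Matrix (Fin 2) (Fin 2) ℝ) 1 1),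
      sq_nonneg ((B : Matrix (Fin 2) (Fin 2) ℝ) 0 1 + (B : Matrix (Fin 2) (Fin 2) ℝ) 1 0)]
  -- find a point x₀ with f x₀ = 1
  set z : ℂ := ⟨p, q⟩ with hz
  have hzne : z ≠ 0 := by
    intro h
    have hre : p = 0 := by rw [hz] at h; exact congrArg Complex.re h
    have him : q = 0 := by rw [hz] at h; exact congrArg Complex.im h
    nlinarith
  have habs : ‖z‖ = Real.sqrt (p^2 + q^2) := by
    rw [Complex.norm_def, Complex.normSq_mk]; ring_nf
  have hsqrt2 : (2:ℝ) ≤ Real.sqrt (p^2 + q^2) := by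
    have : Real.sqrt 4 ≤ Real.sqrt (p^2+q^2) := Real.sqrt_le_sqrt hs4
    nlinarith [Real.sq_sqrt (by norm_num : (4:ℝ) ≥ 0), Real.sqrt_nonneg (4:ℝ),
      Real.sqrt_nonneg (p^2+q^2)]
  have hfval0 : p * Real.cos (Complex.arg z) + q * Real.sin (Complex.arg z)
      = Real.sqrt (p^2 + q^2) := by
    rw [Complex.cos_arg hzne, Complex.sin_arg, habs]
    have h1 : z.re = p := rfl
    have h2 : z.im = q := rfl
    rw [h1, h2]
    have hsp : (0:ℝ) < Real.sqrt (p^2+q^2) := by linarith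
    field_simp
    nlinarith [Real.sq_sqrt (show (0:ℝ) ≤ p^2+q^2 by positivity)]
  have hfval : f (Complex.arg z) = Real.sqrt (p^2 + q^2) := by
    simpa [hf] using hfval0
  have hfval' : f (Complex.arg z + π) = -Real.sqrt (p^2 + q^2) := by
    simp only [hf, Real.cos_add_pi, Real.sin_add_pi]
    linarith [hfval0]
  obtain ⟨x₀, _, hx₀⟩ : ∃ x₀ ∈ Set.Icc (Complex.arg z) (Complex.arg z + π), f x₀ = 1 := by
    have hab : Complex.arg z ≤ Complex.arg z + π := by linarith
    have := intermediate_value_Icc' hab (hfcont.continuousOn)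
    have h1 : (1:ℝ) ∈ Set.Icc (f (Complex.arg z + π)) (f (Complex.arg z)) := by
      rw [hfval, hfval']; constructor <;> linarith
    obtain ⟨x₀, hx₀mem, hx₀⟩ := this h1
    exact ⟨x₀, hx₀mem, hx₀⟩
  -- open ball around x₀ inside {f ∈ (0,2)}
  have hVopen : IsOpen (f ⁻¹' Set.Ioo (0:ℝ) 2) := hfcont.isOpen_preimage _ isOpen_Ioo
  obtain ⟨δ, hδ0, hball⟩ := Metric.isOpen_iff.1 hVopen x₀ (by simp [hx₀])
  -- dense subgroup generated by θ and 2π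
  have hdense : Dense ((AddSubgroup.closure {θ, 2*π} : AddSubgroup ℝ) : Set ℝ) := by
    rcases AddSubgroup.dense_or_cyclic (AddSubgroup.closure {θ, 2*π}) with h | ⟨a, ha⟩
    · exact h
    · exfalso
      have hθmem : θ ∈ AddSubgroup.closure ({θ, 2*π} : Set ℝ) :=
        AddSubgroup.subset_closure (by simp)
      have h2πmem : 2*π ∈ AddSubgroup.closure ({θ, 2*π} : Set ℝ) :=
        AddSubgroup.subset_closure (by simp)
      rw [ha, AddSubgroup.mem_closure_singleton] at hθmem h2πmem
      obtain ⟨k, hk⟩ := hθmem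
      obtain ⟨l, hl⟩ := h2πmem
      rw [zsmul_eq_mul] at hk hl
      have hl0 : l ≠ 0 := by
        rintro rfl
        simp at hl
      apply hirr
      refine ⟨(2*k : ℚ)/l, ?_⟩
      have hlr : (l:ℝ) ≠ 0 := Int.cast_ne_zero.2 hl0
      have hπ0 : π ≠ 0 := by linarith
      push_cast
      rw [div_eq_div_iff hlr hπ0]
      linear_combination (l:ℝ) * hk - (k:ℝ) * hl
  -- a small positive element of the subgroup
  obtain ⟨g, hgmem, hg0, hgsmall⟩ : ∃ g ∈ (AddSubgroup.closure ({θ, 2*π} : Set ℝ) : Set ℝ),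
      0 < g ∧ g < min δ 1 := by
    obtain ⟨g, hgmem, hg⟩ := hdense.exists_between (show (0:ℝ) < min δ 1 by
      simp [hδ0])
    exact ⟨g, hgmem, hg.1, hg.2⟩
  rw [SetLike.mem_coe, AddSubgroup.mem_closure_pair] at hgmem
  obtain ⟨n₀, m₀, hrep⟩ := hgmem
  rw [zsmul_eq_mul, zsmul_eq_mul] at hrep
  have hn₀ : n₀ ≠ 0 := by
    rintro rfl
    simp at hrep
    have hg1 : g < 1 := lt_of_lt_of_le hgsmall (min_le_right _ _)
    rcases lt_trichotomy m₀ 0 with h | h | h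
    · have : (m₀:ℝ) ≤ -1 := by exact_mod_cast Int.le_sub_one_of_lt h
      nlinarith
    · rw [h] at hrep; simp at hrep; linarith
    · have : (1:ℝ) ≤ (m₀:ℝ) := by exact_mod_cast h
      nlinarith
  -- the set of good multipliers k is infinite
  set T : Set ℕ := {k : ℕ | ∃ j : ℤ, (k:ℝ)*g - 2*π*j ∈ Metric.ball x₀ δ} with hT
  have hTinf : T.Infinite := by
    apply Set.infinite_of_not_bddAbove
    rintro ⟨K, hK⟩
    -- find k > K in T
    obtain ⟨j, hj⟩ := exists_int_gt (((K:ℝ)*g - x₀ + δ)/(2*π))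
    have h2π : (0:ℝ) < 2*π := by linarith
    have hA : (K:ℝ)*g < x₀ - δ + 2*π*j := by
      rw [div_lt_iff₀ h2π] at hj
      linarith
    set A : ℝ := x₀ - δ + 2*π*j with hAdef
    have hA0 : 0 < A := lt_of_le_of_lt (by positivity) hA
    obtain ⟨k₁, hk₁⟩ := exists_nat_gt (A/g)
    have hPk₁ : A < (k₁:ℝ)*g := by
      rw [div_lt_iff₀ hg0] at hk₁
      linarith
    have hex : ∃ k : ℕ, A < (k:ℝ)*g := ⟨k₁, hPk₁⟩
    have hkspec : A < ((Nat.find hex : ℕ):ℝ)*g := Nat.find_spec hex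
    have hkpos : Nat.find hex ≠ 0 := by
      intro h
      rw [h] at hkspec
      simp at hkspec
      linarith
    obtain ⟨k', hk'⟩ := Nat.exists_eq_succ_of_ne_zero hkpos
    have hkmin : ¬ (A < (k':ℝ)*g) := Nat.find_min hex (by omega)
    rw [hk'] at hkspec
    push_neg at hkmin
    clear hk' hkpos hPk₁ hk₁ hex
    have hgδ : g < δ := lt_of_lt_of_le hgsmall (min_le_left _ _)
    have hcast : ((k'.succ:ℕ):ℝ) = (k':ℝ) + 1 := by push_cast; ring
    rw [hcast] at hkspec
    have hexp : ((k':ℝ)+1)*g = (k':ℝ)*g + g := by ring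
    have hub : ((k':ℝ)+1)*g < A + 2*δ := by rw [hexp]; linarith
    have hkT : (k'+1) ∈ T := by
      refine ⟨j, ?_⟩
      rw [Metric.mem_ball, Real.dist_eq, abs_lt]
      rw [hAdef] at hkspec hub
      push_cast
      constructor <;> linarith
    have hkK : K < k'+1 := by
      by_contra hcon
      push_neg at hcon
      have hle : ((k'+1:ℕ):ℝ)*g ≤ (K:ℝ)*g := by
        apply mul_le_mul_of_nonneg_right _ hg0.le
        exact_mod_cast hcon
      rw [hcast] at hle
      linarith
    exact absurd (hK hkT) (not_le.2 hkK)
  -- map k ↦ k * n₀ into the target set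
  have hmap : ∀ k ∈ T, ((k:ℤ) * n₀) ∈ {n : ℤ | 0 < |Matrix.trace ((B * rotMat θ ^ n : SL2R) :
      Matrix (Fin 2) (Fin 2) ℝ)| ∧
      |Matrix.trace ((B * rotMat θ ^ n : SL2R) : Matrix (Fin 2) (Fin 2) ℝ)| < 2} := by
    rintro k ⟨j, hjball⟩
    have hy := hball hjball
    rw [Set.mem_preimage, Set.mem_Ioo] at hy
    have harg : (((k:ℤ) * n₀ : ℤ):ℝ) * θ = ((k:ℝ)*g - 2*π*j) + ((j - (k:ℤ)*m₀ : ℤ):ℝ)*(2*π) := by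
      push_cast
      linear_combination (k:ℝ) * hrep
    rw [Set.mem_setOf_eq, htr, harg, hper]
    constructor
    · rw [abs_pos]; linarith
    · rw [abs_lt]; constructor <;> linarith
  -- conclude
  have himg : ((fun k : ℕ => (k:ℤ) * n₀) '' T).Infinite := by
    apply Set.Infinite.image _ hTinf
    intro a _ b _ hab
    have : (a:ℤ) = b := mul_right_cancel₀ hn₀ hab
    exact_mod_cast this
  apply himg.mono
  rintro n ⟨k, hkT, rfl⟩
  exact hmap k hkT


end
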